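/- Let ρ = [[A, B],[B†, C]] be a 2d×2d PPT state with A positive definite. Define X₁ = A^{1/2} and B̃ = A^{−1/2} B A^{−1/2}. Then ρ is SPPT (i.e., admits a decomposition of the form (2) in the SPPT construction with the condition X₁†S†SX₁ = X₁†SS†X₁) if and only if B†A⁻¹B = BA⁻¹B†. -/

import Mathlib

open Matrix Kronecker Finset ComplexOrder

/-- 2x2 block matrix with n×n blocks, indexed by `Fin 2 × n`. -/
def blk {n : Type*} (A B C D : Matrix n n ℂ) :
    Matrix (Fin 2 × n) (Fin 2 × n) ℂ := fun p q =>
  if p.1 = 0 then (if q.1 = 0 then A p.2 q.2 else B p.2 q.2)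
  else (if q.1 = 0 then C p.2 q.2 else D p.2 q.2)

/-- Partial transpose on the first (qubit) factor. -/
def ptA {n : Type*} (ρ : Matrix (Fin 2 × n) (Fin 2 × n) ℂ) :
    Matrix (Fin 2 × n) (Fin 2 × n) ℂ := fun p q => ρ (q.1, p.2) (p.1, q.2)

/-- Separability of an (unnormalized) state on ℂ²⊗ℂⁿ. -/
def SepState {n : Type*} [Fintype n] (ρ : Matrix (Fin 2 × n) (Fin 2 × n) ℂ) : Prop :=
  ∃ (N : ℕ) (σ : Fin N → Matrix (Fin 2) (Fin 2) ℂ) (P : Fin N → Matrix n n ℂ),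
    (∀ i, (σ i).PosSemidef) ∧ (∀ i, (P i).PosSemidef) ∧ ρ = ∑ i, σ i ⊗ₖ P i

theorem stmt7 {d : ℕ} (A B C : Matrix (Fin d) (Fin d) ℂ) (hA : A.PosDef)
    (hρ : (blk A B Bᴴ C).PosSemidef)
    (hppt : (blk A Bᴴ B C).PosSemidef) :
    (∃ X₁ X₂ S : Matrix (Fin d) (Fin d) ℂ,
        X₁ᴴ * Sᴴ * S * X₁ = X₁ᴴ * S * Sᴴ * X₁ ∧
        A = X₁ᴴ * X₁ ∧ B = X₁ᴴ * S * X₁ ∧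
        C = X₁ᴴ * Sᴴ * S * X₁ + X₂ᴴ * X₂) ↔
      Bᴴ * A⁻¹ * B = B * A⁻¹ * Bᴴ := by
  constructor
  · rintro ⟨X₁, X₂, S, hcomm, hA', hB', -⟩
    have hdetA : IsUnit A.det := (Matrix.isUnit_iff_isUnit_det A).mp hA.isUnit
    have hdet : IsUnit X₁.det := by
      rw [hA', Matrix.det_mul] at hdetA
      exact isUnit_of_mul_isUnit_right hdetA
    have hdetH : IsUnit X₁ᴴ.det := by
      rw [Matrix.det_conjTranspose]
      exact isUnit_star.mpr hdet
    have key : X₁ * A⁻¹ * X₁ᴴ = 1 := by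
      rw [hA', Matrix.mul_inv_rev, ← Matrix.mul_assoc, Matrix.mul_nonsing_inv _ hdet,
        Matrix.one_mul, Matrix.nonsing_inv_mul _ hdetH]
    have hBH : Bᴴ = X₁ᴴ * Sᴴ * X₁ := by
      rw [hB']
      simp [Matrix.conjTranspose_mul, Matrix.mul_assoc]
    have e1 : Bᴴ * A⁻¹ * B = X₁ᴴ * Sᴴ * S * X₁ := by
      rw [hBH, hB']
      calc X₁ᴴ * Sᴴ * X₁ * A⁻¹ * (X₁ᴴ * S * X₁)
          = X₁ᴴ * Sᴴ * (X₁ * A⁻¹ * X₁ᴴ) * S * X₁ := by simp only [Matrix.mul_assoc]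
        _ = X₁ᴴ * Sᴴ * S * X₁ := by rw [key, Matrix.mul_one]
    have e2 : B * A⁻¹ * Bᴴ = X₁ᴴ * S * Sᴴ * X₁ := by
      rw [hBH, hB']
      calc X₁ᴴ * S * X₁ * A⁻¹ * (X₁ᴴ * Sᴴ * X₁)
          = X₁ᴴ * S * (X₁ * A⁻¹ * X₁ᴴ) * Sᴴ * X₁ := by simp only [Matrix.mul_assoc]
        _ = X₁ᴴ * S * Sᴴ * X₁ := by rw [key, Matrix.mul_one]
    rw [e1, e2]
    exact hcomm
  · intro h
    open scoped MatrixOrder in set R := CFC.sqrt A with hRdef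
    have hRH : Rᴴ = R := by
      open scoped MatrixOrder in exact (Matrix.nonneg_iff_posSemidef.mp (CFC.sqrt_nonneg A)).1
    have hRR : R * R = A := by
      open scoped MatrixOrder in exact CFC.sqrt_mul_sqrt_self A hA.posSemidef.nonneg
    have hdetR : IsUnit R.det := by
      have h2 : IsUnit (R * R).det := by
        rw [hRR]
        exact (Matrix.isUnit_iff_isUnit_det A).mp hA.isUnit
      rw [Matrix.det_mul] at h2
      exact isUnit_of_mul_isUnit_right h2
    have hRinv1 : R * R⁻¹ = 1 := Matrix.mul_nonsing_inv _ hdetR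
    have hRinv2 : R⁻¹ * R = 1 := Matrix.nonsing_inv_mul _ hdetR
    have hRinvH : (R⁻¹)ᴴ = R⁻¹ := by rw [Matrix.conjTranspose_nonsing_inv, hRH]
    have hAinv : A⁻¹ = R⁻¹ * R⁻¹ := by rw [← hRR, Matrix.mul_inv_rev]
    haveI : Invertible A := hA.isUnit.invertible
    have hfbeq : Matrix.fromBlocks A B Bᴴ C =
        (blk A B Bᴴ C).submatrix (Sum.elim (fun i => ((0 : Fin 2), i)) fun i => ((1 : Fin 2), i))
          (Sum.elim (fun i => ((0 : Fin 2), i)) fun i => ((1 : Fin 2), i)) := by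
      ext p q
      rcases p with p | p <;> rcases q with q | q <;> rfl
    have hfb : (Matrix.fromBlocks A B Bᴴ C).PosSemidef := by
      rw [hfbeq]
      exact hρ.submatrix _
    have hschur : (C - Bᴴ * A⁻¹ * B).PosSemidef :=
      (Matrix.PosDef.fromBlocks₁₁ B C hA).mp hfb
    have hSH : (R⁻¹ * B * R⁻¹)ᴴ = R⁻¹ * Bᴴ * R⁻¹ := by
      simp [Matrix.conjTranspose_mul, hRinvH, Matrix.mul_assoc]
    have eL : ∀ M N : Matrix (Fin d) (Fin d) ℂ,
        Rᴴ * (R⁻¹ * M * R⁻¹) * (R⁻¹ * N * R⁻¹) * R = M * A⁻¹ * N := by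
      intro M N
      rw [hRH, hAinv]
      calc R * (R⁻¹ * M * R⁻¹) * (R⁻¹ * N * R⁻¹) * R
          = R * R⁻¹ * M * (R⁻¹ * R⁻¹) * N * (R⁻¹ * R) := by simp only [Matrix.mul_assoc]
        _ = M * (R⁻¹ * R⁻¹) * N := by
            rw [hRinv1, hRinv2, Matrix.one_mul, Matrix.mul_one]
    open scoped MatrixOrder in refine ⟨R, CFC.sqrt (C - Bᴴ * A⁻¹ * B), R⁻¹ * B * R⁻¹, ?_, ?_, ?_, ?_⟩
    · rw [hSH, eL, eL]
      exact h
    · rw [hRH, hRR]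
    · rw [hRH]
      have h3 : R * (R⁻¹ * B * R⁻¹) * R = R * R⁻¹ * B * (R⁻¹ * R) := by
        simp only [Matrix.mul_assoc]
      rw [h3, hRinv1, hRinv2, Matrix.one_mul, Matrix.mul_one]
    · open scoped MatrixOrder in
      rw [hSH, eL, (Matrix.nonneg_iff_posSemidef.mp (CFC.sqrt_nonneg (C - Bᴴ * A⁻¹ * B))).1,
        CFC.sqrt_mul_sqrt_self _ hschur.nonneg]
      abel
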